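/- For all κ ∈ (0,1), all integers k, m and all δ > 0, setting g_k(δ) = (e^{ikδ} − 1)/k for k ≠ 0, one has |g_k(δ) − g_m(δ)| ≤ C·δ^{2−2κ}·|k−m|^{1−κ}·(1/|k| + 1/|m|)^κ for a universal constant C, for all nonzero integers k, m. -/

import Mathlib

open Complex

-- ‖e^{it} - 1‖ ≤ |t|
lemma hh1 (t : ℝ) : ‖Complex.exp ((t : ℂ) * I) - 1‖ ≤ |t| := by
  have heq : Complex.exp ((t : ℂ) * I) - 1
      = ((Real.cos t - 1 : ℝ) : ℂ) + ((Real.sin t : ℝ) : ℂ) * I := by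
    rw [Complex.exp_mul_I, ← Complex.ofReal_cos, ← Complex.ofReal_sin]
    push_cast
    ring
  rw [heq]
  have : ‖((Real.cos t - 1 : ℝ) : ℂ) + ((Real.sin t : ℝ) : ℂ) * I‖
      = Real.sqrt ((Real.cos t - 1)^2 + (Real.sin t)^2) := by
    rw [Complex.norm_add_mul_I]
  rw [this, ← Real.sqrt_sq_eq_abs]
  apply Real.sqrt_le_sqrt
  have hc := Real.one_sub_sq_div_two_le_cos (x := t)
  have hs : (Real.sin t)^2 + (Real.cos t)^2 = 1 := Real.sin_sq_add_cos_sq t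
  nlinarith

-- ‖e^{it} - 1 - it‖ ≤ 3 t^2
lemma hh2 (t : ℝ) : ‖Complex.exp ((t : ℂ) * I) - 1 - (t : ℂ) * I‖ ≤ 3 * t ^ 2 := by
  have hsq : |t| ^ 2 = t ^ 2 := sq_abs t
  rcases le_or_gt |t| 1 with h | h
  · have habs : ‖(t:ℂ) * I‖ = |t| := by simp
    have key := Complex.norm_exp_sub_one_sub_id_le (x := (t:ℂ) * I) (by rw [habs]; exact h)
    rw [habs] at key
    calc ‖Complex.exp ((t : ℂ) * I) - 1 - (t : ℂ) * I‖ ≤ |t|^2 := key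
      _ ≤ 3 * t^2 := by rw [hsq]; nlinarith [sq_nonneg t]
  · have h1' := hh1 t
    have htri : ‖Complex.exp ((t : ℂ) * I) - 1 - (t : ℂ) * I‖
        ≤ ‖Complex.exp ((t : ℂ) * I) - 1‖ + ‖(t : ℂ) * I‖ := norm_sub_le _ _
    have hti : ‖(t : ℂ) * I‖ = |t| := by simp
    have h2' : |t| ≤ t^2 := by nlinarith
    nlinarith

lemma key (k m : ℤ) (hk : k ≠ 0) (hm : m ≠ 0) (hkm : |(m:ℝ)| ≤ |(k:ℝ)|) (δ : ℝ) (hδ : 0 < δ) :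
    ‖(Complex.exp (Complex.I * (k : ℂ) * (δ : ℂ)) - 1) / (k : ℂ)
        - (Complex.exp (Complex.I * (m : ℂ) * (δ : ℂ)) - 1) / (m : ℂ)‖
      ≤ 10 * |((k - m : ℤ) : ℝ)| * δ ^ 2 := by
  set K : ℝ := |(k:ℝ)| with hK
  set M : ℝ := |(m:ℝ)| with hM
  set U : ℝ := |((k - m : ℤ) : ℝ)| with hU
  have hk' : (k:ℂ) ≠ 0 := by exact_mod_cast (Int.cast_ne_zero (α := ℂ)).mpr hk
  have hm' : (m:ℂ) ≠ 0 := by exact_mod_cast (Int.cast_ne_zero (α := ℂ)).mpr hm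
  have hK1 : (1:ℝ) ≤ K := by
    rw [hK]; exact_mod_cast Int.one_le_abs hk
  have hM1 : (1:ℝ) ≤ M := by
    rw [hM]; exact_mod_cast Int.one_le_abs hm
  have hUKM : U ≤ K + M := by
    rw [hU, hK, hM]; push_cast; exact (abs_sub _ _)
  -- rewrite exponentials as exp (t * I) for real t
  have hrw : ∀ n : ℤ, Complex.I * (n : ℂ) * (δ : ℂ) = ((n * δ : ℝ) : ℂ) * I := by
    intro n; push_cast; ring
  rw [hrw k, hrw m]
  set b : ℂ := Complex.exp (((m * δ : ℝ) : ℂ) * I) with hb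
  set c : ℂ := Complex.exp ((((k - m : ℤ) * δ : ℝ) : ℂ) * I) with hc
  have hac : Complex.exp (((k * δ : ℝ) : ℂ) * I) = b * c := by
    rw [hb, hc, ← Complex.exp_add]
    congr 1
    push_cast; ring
  have hid : (Complex.exp (((k * δ : ℝ) : ℂ) * I) - 1) / (k : ℂ) - (b - 1) / (m : ℂ)
      = b * (c - 1 - (((k - m : ℤ) * δ : ℝ) : ℂ) * I) / (k : ℂ)
        + (((k - m : ℤ) * δ : ℝ) : ℂ) * I * (b - 1) / (k : ℂ)
        - ((k - m : ℤ) : ℂ) * (b - 1 - ((m * δ : ℝ) : ℂ) * I) / ((k : ℂ) * (m : ℂ)) := by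
    rw [hac]
    field_simp
    push_cast
    ring
  rw [hid]
  have hbn : ‖b‖ = 1 := by rw [hb]; exact Complex.norm_exp_ofReal_mul_I _
  have hkc : ‖(k:ℂ)‖ = K := by rw [hK]; simp
  have hmc : ‖(m:ℂ)‖ = M := by rw [hM]; simp
  have hkmc : ‖((k - m : ℤ) : ℂ)‖ = U := by
    rw [hU]
    rw [show (‖((k - m : ℤ):ℂ)‖) = ‖((k - m : ℤ):ℂ)‖ from rfl]
    rw [Complex.norm_intCast]
  have hIn : ‖(I : ℂ)‖ = 1 := by simp
  have n1 : ‖b * (c - 1 - (((k - m : ℤ) * δ : ℝ) : ℂ) * I) / (k : ℂ)‖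
      ≤ 3 * (U * δ)^2 / K := by
    rw [norm_div, norm_mul, hbn, hkc, one_mul]
    apply div_le_div_of_nonneg_right ?_ (by linarith) |>.trans_eq rfl
    have := hh2 ((k - m : ℤ) * δ)
    rw [hc]
    calc ‖Complex.exp ((((k - m : ℤ) * δ : ℝ):ℂ) * I) - 1 - (((k - m : ℤ) * δ : ℝ):ℂ) * I‖
        ≤ 3 * ((k - m : ℤ) * δ : ℝ)^2 := this
      _ = 3 * (U * δ)^2 := by rw [hU, mul_pow, mul_pow, _root_.sq_abs]
  have n2 : ‖(((k - m : ℤ) * δ : ℝ) : ℂ) * I * (b - 1) / (k : ℂ)‖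
      ≤ U * δ * (M * δ) / K := by
    rw [norm_div, norm_mul, norm_mul, hkc, hIn, mul_one]
    apply div_le_div_of_nonneg_right ?_ (by linarith)
    have hb1 : ‖b - 1‖ ≤ M * δ := by
      rw [hb]
      calc ‖Complex.exp (((m * δ : ℝ):ℂ) * I) - 1‖ ≤ |(m:ℝ) * δ| := hh1 _
        _ = M * δ := by rw [abs_mul, hM, abs_of_pos hδ]
    have hud : ‖((((k - m : ℤ) * δ : ℝ)) : ℂ)‖ = U * δ := by
      rw [Complex.norm_real, Real.norm_eq_abs, abs_mul, hU, abs_of_pos hδ]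
    rw [hud]
    exact mul_le_mul_of_nonneg_left hb1 (by positivity)
  have n3 : ‖((k - m : ℤ) : ℂ) * (b - 1 - ((m * δ : ℝ) : ℂ) * I) / ((k : ℂ) * (m : ℂ))‖
      ≤ U * (3 * (M * δ)^2) / (K * M) := by
    rw [norm_div, norm_mul, norm_mul, hkc, hmc, hkmc]
    apply div_le_div_of_nonneg_right ?_ (by positivity)
    apply mul_le_mul_of_nonneg_left ?_ (by positivity)
    rw [hb]
    calc ‖Complex.exp (((m * δ : ℝ):ℂ) * I) - 1 - ((m * δ : ℝ):ℂ) * I‖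
        ≤ 3 * ((m:ℝ) * δ)^2 := hh2 _
      _ = 3 * (M * δ)^2 := by rw [mul_pow, mul_pow, hM, _root_.sq_abs]
  have htri : ‖b * (c - 1 - (((k - m : ℤ) * δ : ℝ) : ℂ) * I) / (k : ℂ)
        + (((k - m : ℤ) * δ : ℝ) : ℂ) * I * (b - 1) / (k : ℂ)
        - ((k - m : ℤ) : ℂ) * (b - 1 - ((m * δ : ℝ) : ℂ) * I) / ((k : ℂ) * (m : ℂ))‖
      ≤ 3 * (U * δ)^2 / K + U * δ * (M * δ) / K + U * (3 * (M * δ)^2) / (K * M) := by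
    refine (norm_sub_le _ _).trans ?_
    refine add_le_add ((norm_add_le _ _).trans (add_le_add n1 n2)) n3
  refine htri.trans ?_
  have hU2K : U ≤ 2 * K := by linarith
  have hUnn : (0:ℝ) ≤ U := abs_nonneg _
  have hKpos : (0:ℝ) < K := by linarith
  have hMpos : (0:ℝ) < M := by linarith
  have e1 : 3 * (U * δ)^2 / K ≤ 6 * U * δ^2 := by
    rw [div_le_iff₀ hKpos]
    nlinarith [mul_nonneg (mul_nonneg hUnn (sq_nonneg δ)) (sub_nonneg.mpr hU2K)]
  have e2 : U * δ * (M * δ) / K ≤ U * δ^2 := by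
    rw [div_le_iff₀ hKpos]
    nlinarith [mul_nonneg hUnn (mul_nonneg (le_of_lt hδ) (le_of_lt hδ))]
  have e3 : U * (3 * (M * δ)^2) / (K * M) ≤ 3 * U * δ^2 := by
    rw [div_le_iff₀ (by positivity)]
    have : U * (3 * (M * δ)^2) = 3 * U * δ^2 * M * M := by ring
    rw [this]
    have : 3 * U * δ^2 * (K * M) = 3 * U * δ^2 * K * M := by ring
    rw [this]
    apply mul_le_mul_of_nonneg_right ?_ (le_of_lt hMpos)
    apply mul_le_mul_of_nonneg_left hkm (by positivity)
  linarith

lemma keyboth (k m : ℤ) (hk : k ≠ 0) (hm : m ≠ 0) (δ : ℝ) (hδ : 0 < δ) :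
    ‖(Complex.exp (Complex.I * (k : ℂ) * (δ : ℂ)) - 1) / (k : ℂ)
        - (Complex.exp (Complex.I * (m : ℂ) * (δ : ℂ)) - 1) / (m : ℂ)‖
      ≤ 10 * |((k - m : ℤ) : ℝ)| * δ ^ 2 := by
  rcases le_total |(m:ℝ)| |(k:ℝ)| with h | h
  · exact key k m hk hm h δ hδ
  · rw [norm_sub_rev]
    have := key m k hm hk h δ hδ
    have habs : |((m - k : ℤ) : ℝ)| = |((k - m : ℤ) : ℝ)| := by
      push_cast; rw [abs_sub_comm]
    rwa [habs] at this

lemma triv (k m : ℤ) (hk : k ≠ 0) (hm : m ≠ 0) (δ : ℝ) :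
    ‖(Complex.exp (Complex.I * (k : ℂ) * (δ : ℂ)) - 1) / (k : ℂ)
        - (Complex.exp (Complex.I * (m : ℂ) * (δ : ℂ)) - 1) / (m : ℂ)‖
      ≤ 2 * (1 / |(k : ℝ)| + 1 / |(m : ℝ)|) := by
  have hone : ∀ n : ℤ, n ≠ 0 → ‖(Complex.exp (Complex.I * (n : ℂ) * (δ : ℂ)) - 1) / (n : ℂ)‖
      ≤ 2 / |(n : ℝ)| := by
    intro n hn
    have hrw : Complex.I * (n : ℂ) * (δ : ℂ) = ((n * δ : ℝ) : ℂ) * I := by push_cast; ring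
    rw [hrw, norm_div]
    have h1 : ‖Complex.exp (((n * δ : ℝ) : ℂ) * I) - 1‖ ≤ 2 := by
      refine (norm_sub_le _ _).trans ?_
      rw [show ‖Complex.exp (((↑n * δ : ℝ):ℂ) * I)‖ = ‖Complex.exp (((↑n * δ : ℝ):ℂ) * I)‖ from rfl,
        Complex.norm_exp_ofReal_mul_I, norm_one]; norm_num
    have h2 : ‖((n : ℤ) : ℂ)‖ = |(n:ℝ)| := by
      rw [show (‖((n : ℤ):ℂ)‖) = ‖((n : ℤ):ℂ)‖ from rfl, Complex.norm_intCast]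
    rw [h2]
    exact div_le_div_of_nonneg_right h1 (by positivity) |>.trans_eq rfl
  calc _ ≤ ‖(Complex.exp (Complex.I * (k : ℂ) * (δ : ℂ)) - 1) / (k : ℂ)‖
        + ‖(Complex.exp (Complex.I * (m : ℂ) * (δ : ℂ)) - 1) / (m : ℂ)‖ := norm_sub_le _ _
    _ ≤ 2 / |(k : ℝ)| + 2 / |(m : ℝ)| := add_le_add (hone k hk) (hone m hm)
    _ = 2 * (1 / |(k : ℝ)| + 1 / |(m : ℝ)|) := by ring

lemma interp {L X Y κ : ℝ} (hL : 0 ≤ L) (hX : L ≤ X) (hY : L ≤ Y)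
    (hκ0 : 0 < κ) (hκ1 : κ < 1) : L ≤ X ^ (1 - κ) * Y ^ κ := by
  rcases eq_or_lt_of_le hL with h0 | h0
  · refine (le_of_eq h0.symm).trans ?_ |>.trans_eq rfl
    · exact mul_nonneg (Real.rpow_nonneg (hX.trans' hL) _) (Real.rpow_nonneg (hY.trans' hL) _)
  · calc L = L ^ ((1 - κ) + κ) := by rw [sub_add_cancel, Real.rpow_one]
      _ = L ^ (1 - κ) * L ^ κ := Real.rpow_add h0 _ _
      _ ≤ X ^ (1 - κ) * Y ^ κ := by
          refine mul_le_mul (Real.rpow_le_rpow hL hX (by linarith))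
            (Real.rpow_le_rpow hL hY hκ0.le) (Real.rpow_nonneg hL _)
            (Real.rpow_nonneg (hX.trans' hL) _)


/-- With `g_k(δ) = (e^{ikδ} - 1)/k`, one has
`|g_k(δ) - g_m(δ)| ≤ C δ^{2-2κ} |k-m|^{1-κ} (1/|k| + 1/|m|)^κ` for all `κ ∈ (0,1)`,
nonzero integers `k, m`, and `δ > 0`, with a universal constant `C`. -/
theorem stmt_18 :
    ∃ C : ℝ, 0 < C ∧
      ∀ κ : ℝ, κ ∈ Set.Ioo (0 : ℝ) 1 →
      ∀ k m : ℤ, k ≠ 0 → m ≠ 0 → ∀ δ : ℝ, 0 < δ →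
        ‖(Complex.exp (Complex.I * (k : ℂ) * (δ : ℂ)) - 1) / (k : ℂ)
            - (Complex.exp (Complex.I * (m : ℂ) * (δ : ℂ)) - 1) / (m : ℂ)‖
          ≤ C * δ ^ (2 - 2 * κ) * |((k - m : ℤ) : ℝ)| ^ (1 - κ)
              * (1 / |(k : ℝ)| + 1 / |(m : ℝ)|) ^ κ := by
  refine ⟨20, by norm_num, ?_⟩
  rintro κ ⟨hκ0, hκ1⟩ k m hk hm δ hδ
  set L := ‖(Complex.exp (Complex.I * (k : ℂ) * (δ : ℂ)) - 1) / (k : ℂ)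
      - (Complex.exp (Complex.I * (m : ℂ) * (δ : ℂ)) - 1) / (m : ℂ)‖ with hL
  set U : ℝ := |((k - m : ℤ) : ℝ)| with hUdef
  set S : ℝ := 1 / |(k : ℝ)| + 1 / |(m : ℝ)| with hSdef
  have hUnn : (0:ℝ) ≤ U := abs_nonneg _
  have hSnn : (0:ℝ) ≤ S := by positivity
  have hX := keyboth k m hk hm δ hδ
  have hY := triv k m hk hm δ
  have hinterp : L ≤ (10 * U * δ ^ 2) ^ (1 - κ) * (2 * S) ^ κ :=
    interp (norm_nonneg _) hX hY hκ0 hκ1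
  refine hinterp.trans ?_
  have h1κ : (0:ℝ) ≤ 1 - κ := by linarith
  have e10 : (10 : ℝ) ^ (1 - κ) ≤ 10 := by
    calc (10:ℝ) ^ (1 - κ) ≤ (10:ℝ) ^ (1:ℝ) :=
          Real.rpow_le_rpow_of_exponent_le (by norm_num) (by linarith)
      _ = 10 := Real.rpow_one _
  have e2 : (2 : ℝ) ^ κ ≤ 2 := by
    calc (2:ℝ) ^ κ ≤ (2:ℝ) ^ (1:ℝ) :=
          Real.rpow_le_rpow_of_exponent_le (by norm_num) (by linarith)
      _ = 2 := Real.rpow_one _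
  have hsplit : (10 * U * δ ^ 2) ^ (1 - κ) * (2 * S) ^ κ
      = (10:ℝ) ^ (1 - κ) * (2:ℝ) ^ κ * (δ ^ (2 - 2*κ) * U ^ (1 - κ) * S ^ κ) := by
    rw [Real.mul_rpow (by positivity) (by positivity),
      Real.mul_rpow (by norm_num) hUnn,
      Real.mul_rpow (by norm_num) hSnn]
    have hδ2 : (δ ^ 2 : ℝ) ^ (1 - κ) = δ ^ (2 - 2*κ) := by
      rw [← Real.rpow_natCast δ 2, ← Real.rpow_mul hδ.le]
      norm_num
      ring_nf
    rw [hδ2]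
    ring
  rw [hsplit]
  have hrest : (0:ℝ) ≤ δ ^ (2 - 2*κ) * U ^ (1 - κ) * S ^ κ := by positivity
  calc (10:ℝ) ^ (1 - κ) * (2:ℝ) ^ κ * (δ ^ (2 - 2*κ) * U ^ (1 - κ) * S ^ κ)
      ≤ 10 * 2 * (δ ^ (2 - 2*κ) * U ^ (1 - κ) * S ^ κ) := by
        refine mul_le_mul_of_nonneg_right ?_ hrest
        exact mul_le_mul e10 e2 (Real.rpow_nonneg (by norm_num) _) (by norm_num)
    _ = 20 * δ ^ (2 - 2*κ) * U ^ (1 - κ) * S ^ κ := by ring
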